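/- For any linear functional X on pointed k-chains with max{|X|₀,...,|X|_r} < ∞, the bound |X(A)| ≤ max{|X|₀,...,|X|_r} · ‖A‖_{B^r} holds for every pointed k-chain A. -/
import Mathlib


/-! Pointed chains: finitely supported functions from points of `E` to "k-vectors" in `V`,
difference chains, and the `B^r` norms of J. Harrison's theory of differential chains. -/

open Finsupp

variable {E V : Type*} [NormedAddCommGroup E] [NormedSpace ℝ E]
  [NormedAddCommGroup V] [NormedSpace ℝ V]

/-- The difference chain `Δ^j_U (p; α)`, for a list `U = [u₁,…,u_j]` of vectors. -/
noncomputable def diffChain : List E → E → V → (E →₀ V)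
  | [], p, α => Finsupp.single p α
  | u :: U, p, α => Finsupp.mapDomain (· + u) (diffChain U p α) - diffChain U p α

/-- The weight `|Δ^j_U(p;α)|_j := ‖u₁‖⋯‖u_j‖‖α‖` of a difference chain. -/
noncomputable def dweight (U : List E) (α : V) : ℝ := (U.map fun u => ‖u‖).prod * ‖α‖

/-- The `r`-norm `‖A‖_{B^r}` on pointed chains: the infimum of `Σᵢ |Δ^{jᵢ}_{Uᵢ}(pᵢ;αᵢ)|_{jᵢ}`
over all decompositions `A = Σᵢ Δ^{jᵢ}_{Uᵢ}(pᵢ;αᵢ)` with all `jᵢ ≤ r`. -/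
noncomputable def Bnorm (r : ℕ) (A : E →₀ V) : ℝ :=
  sInf {s : ℝ | ∃ L : List (List E × E × V),
    (∀ t ∈ L, t.1.length ≤ r) ∧
    A = (L.map fun t => diffChain t.1 t.2.1 t.2.2).sum ∧
    s = (L.map fun t => dweight t.1 t.2.2).sum}

lemma dweight_nonneg (U : List E) (α : V) : 0 ≤ dweight U α :=
  mul_nonneg (List.prod_nonneg (by simp)) (norm_nonneg _)

lemma abs_list_sum (l : List ℝ) : |l.sum| ≤ (l.map abs).sum := by
  induction l with
  | nil => simp
  | cons a t ih =>
    simp only [List.sum_cons, List.map_cons]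
    exact (abs_add_le _ _).trans (by linarith)

/-- If `X` is a linear functional on pointed chains and `C` bounds all the
quantities `|X|₀, …, |X|_r` (i.e. `|X(Δ^j_U(p;α))| ≤ C·|Δ^j_U(p;α)|_j` whenever `j ≤ r`),
then `|X(A)| ≤ C·‖A‖_{B^r}` for every pointed chain `A`. -/
theorem dual_bound (r : ℕ) (X : (E →₀ V) →ₗ[ℝ] ℝ) (C : ℝ)
    (hX : ∀ (U : List E) (p : E) (α : V), U.length ≤ r →
      |X (diffChain U p α)| ≤ C * dweight U α)
    (A : E →₀ V) :
    |X A| ≤ C * Bnorm r A := by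
  set S : Set ℝ := {s : ℝ | ∃ L : List (List E × E × V),
    (∀ t ∈ L, t.1.length ≤ r) ∧
    A = (L.map fun t => diffChain t.1 t.2.1 t.2.2).sum ∧
    s = (L.map fun t => dweight t.1 t.2.2).sum} with hSdef
  have hBnorm : Bnorm r A = sInf S := rfl
  -- S is nonempty
  have hne : S.Nonempty := by
    refine ⟨((A.support.toList.map fun p => (([] : List E), p, A p)).map
        fun t => dweight t.1 t.2.2).sum,
      A.support.toList.map fun p => (([] : List E), p, A p), ?_, ?_, rfl⟩
    · intro t ht
      simp only [List.mem_map] at ht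
      obtain ⟨p, -, rfl⟩ := ht
      simp
    · rw [List.map_map]
      have h1 : ((fun t : List E × E × V => diffChain t.1 t.2.1 t.2.2) ∘
          fun p => (([] : List E), p, A p)) = fun p => Finsupp.single p (A p) := by
        funext p; simp [diffChain]
      rw [h1]
      have h2 : (A.support.toList.map fun p => Finsupp.single p (A p)).sum
          = ∑ p ∈ A.support, Finsupp.single p (A p) := by
        rw [Finset.sum_eq_multiset_sum, ← Multiset.sum_coe, ← Multiset.map_coe,
          Finset.coe_toList]
      rw [h2]
      have := Finsupp.sum_single A
      rw [Finsupp.sum] at this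
      exact this.symm
  -- every element of S is nonneg
  have hpos : ∀ s ∈ S, 0 ≤ s := by
    rintro s ⟨L, -, -, rfl⟩
    apply List.sum_nonneg
    intro x hx
    simp only [List.mem_map] at hx
    obtain ⟨t, -, rfl⟩ := hx
    exact dweight_nonneg _ _
  have hbdd : BddBelow S := ⟨0, hpos⟩
  -- key bound
  have key : ∀ s ∈ S, |X A| ≤ C * s := by
    rintro s ⟨L, hlen, hA, rfl⟩
    rw [hA, map_list_sum, List.map_map]
    calc |((L.map ((X : (E →₀ V) →ₗ[ℝ] ℝ) ∘ fun t => diffChain t.1 t.2.1 t.2.2)).sum)|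
        ≤ ((L.map ((X : (E →₀ V) →ₗ[ℝ] ℝ) ∘ fun t => diffChain t.1 t.2.1 t.2.2)).map abs).sum :=
          abs_list_sum _
      _ ≤ (L.map fun t => C * dweight t.1 t.2.2).sum := by
          rw [List.map_map]
          apply List.sum_le_sum
          intro t ht
          exact hX t.1 t.2.1 t.2.2 (hlen t ht)
      _ = C * (L.map fun t => dweight t.1 t.2.2).sum := by
          clear hlen hA
          induction L with
          | nil => simp
          | cons a tl ih => simp [ih, mul_add]
  rw [hBnorm]
  rcases lt_trichotomy C 0 with hC | hC | hC
  · -- C < 0 forces everything to be 0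
    obtain ⟨s0, hs0⟩ := id hne
    have h1 : |X A| ≤ C * s0 := key s0 hs0
    have h2 : C * s0 ≤ 0 := mul_nonpos_of_nonpos_of_nonneg hC.le (hpos s0 hs0)
    have hXA : |X A| = 0 := le_antisymm (h1.trans h2) (abs_nonneg _)
    have hs00 : s0 = 0 := by
      have : C * s0 = 0 := le_antisymm h2 (hXA ▸ h1)
      exact (mul_eq_zero.1 this).resolve_left hC.ne
    have hInf : sInf S = 0 := le_antisymm (csInf_le hbdd (hs00 ▸ hs0)) (le_csInf hne hpos)
    rw [hXA, hInf, mul_zero]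
  · obtain ⟨s0, hs0⟩ := id hne
    have h1 : |X A| ≤ C * s0 := key s0 hs0
    rw [hC] at h1 ⊢
    simpa using h1
  · rw [mul_comm, ← div_le_iff₀ hC]
    apply le_csInf hne
    intro s hs
    rw [div_le_iff₀ hC, mul_comm]
    exact key s hs
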